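/- For every real number c2, the special perfect entangler U_d(π/2, c2, 0) maps the four orthonormal product states (Ψ1 ± iΨ3)/√2 and (Ψ2 ± iΨ4)/√2 to four pairwise orthogonal unit vectors each of concurrence 1; i.e., every special perfect entangler transforms this orthonormal product basis into an orthonormal maximally entangled basis. -/

import Mathlib

open Matrix Complex
open scoped Matrix Kronecker

noncomputable section

/-- Pauli matrices -/
def σx : Matrix (Fin 2) (Fin 2) ℂ := !![0, 1; 1, 0]
def σy : Matrix (Fin 2) (Fin 2) ℂ := !![0, -Complex.I; Complex.I, 0]
def σz : Matrix (Fin 2) (Fin 2) ℂ := !![1, 0; 0, -1]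

/-- H(c₁,c₂,c₃) = c₁ σx⊗σx + c₂ σy⊗σy + c₃ σz⊗σz -/
def Hmat (c1 c2 c3 : ℝ) : Matrix (Fin 2 × Fin 2) (Fin 2 × Fin 2) ℂ :=
  (c1 : ℂ) • (σx ⊗ₖ σx) + (c2 : ℂ) • (σy ⊗ₖ σy) + (c3 : ℂ) • (σz ⊗ₖ σz)

/-- U_d(c₁,c₂,c₃) = exp(i H(c₁,c₂,c₃)/2) (matrix exponential) -/
def Ud (c1 c2 c3 : ℝ) : Matrix (Fin 2 × Fin 2) (Fin 2 × Fin 2) ℂ :=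
  NormedSpace.exp ((Complex.I / 2) • Hmat c1 c2 c3)

/-- computational basis vector |ab⟩ of ℂ⁴ = ℂ²⊗ℂ², indexed by pairs -/
def ket (a b : Fin 2) : Fin 2 × Fin 2 → ℂ := fun p => if p = (a, b) then 1 else 0

/-- the magic basis Ψ₁, Ψ₂, Ψ₃, Ψ₄ -/
def Psi : Fin 4 → (Fin 2 × Fin 2 → ℂ) :=
  ![((Real.sqrt 2 : ℂ))⁻¹ • (ket 0 0 + ket 1 1),
    (Complex.I * ((Real.sqrt 2 : ℂ))⁻¹) • (ket 0 1 + ket 1 0),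
    ((Real.sqrt 2 : ℂ))⁻¹ • (ket 0 1 - ket 1 0),
    (Complex.I * ((Real.sqrt 2 : ℂ))⁻¹) • (ket 0 0 - ket 1 1)]

/-- concurrence C = 2|αδ − βγ| of a two-qubit state with components (α,β,γ,δ) -/
def conc (v : Fin 2 × Fin 2 → ℂ) : ℝ :=
  2 * ‖v (0, 0) * v (1, 1) - v (0, 1) * v (1, 0)‖

/-- hermitian inner product on ℂ⁴ -/
def ip (v w : Fin 2 × Fin 2 → ℂ) : ℂ :=
  ∑ p : Fin 2 × Fin 2, (starRingEnd ℂ) (v p) * w p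

/-- the orthonormal product basis {(Ψ₁ ± iΨ₃)/√2, (Ψ₂ ± iΨ₄)/√2} -/
def speBasis : Fin 4 → (Fin 2 × Fin 2 → ℂ) :=
  ![((Real.sqrt 2 : ℂ))⁻¹ • (Psi 0 + Complex.I • Psi 2),
    ((Real.sqrt 2 : ℂ))⁻¹ • (Psi 0 - Complex.I • Psi 2),
    ((Real.sqrt 2 : ℂ))⁻¹ • (Psi 1 + Complex.I • Psi 3),
    ((Real.sqrt 2 : ℂ))⁻¹ • (Psi 1 - Complex.I • Psi 3)]

def Smat : Matrix (Fin 2 × Fin 2) (Fin 2 × Fin 2) ℂ := fun p q =>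
  ![![![![(1:ℂ),0],![0,Complex.I]], ![![0,Complex.I],![1,0]]],
    ![![![0,Complex.I],![-1,0]], ![![1,0],![0,-Complex.I]]]] p.1 p.2 q.1 q.2

def Sinv : Matrix (Fin 2 × Fin 2) (Fin 2 × Fin 2) ℂ := fun p q =>
  ![![![![(1:ℂ)/2,0],![0,1/2]], ![![0,-Complex.I/2],![-Complex.I/2,0]]],
    ![![![0,1/2],![-1/2,0]], ![![-Complex.I/2,0],![0,Complex.I/2]]]] p.1 p.2 q.1 q.2

def dvec (c2 : ℝ) : Fin 2 × Fin 2 → ℂ := fun p =>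
  ![![Complex.I * (↑Real.pi - 2*↑c2)/4, Complex.I * (↑Real.pi + 2*↑c2)/4],
    ![-(Complex.I * (↑Real.pi + 2*↑c2)/4), -(Complex.I * (↑Real.pi - 2*↑c2)/4)]] p.1 p.2

lemma hS1 : Smat * Sinv = 1 := by
  ext p q
  fin_cases p <;> fin_cases q <;>
    simp [Smat, Sinv, Matrix.mul_apply, Fintype.sum_prod_type, Fin.sum_univ_two,
      Matrix.one_apply, Prod.ext_iff] <;> ring_nf <;>
    simp [pow_succ, Complex.I_mul_I] <;> ring_nf

lemma hS2 : Sinv * Smat = 1 := by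
  ext p q
  fin_cases p <;> fin_cases q <;>
    simp [Smat, Sinv, Matrix.mul_apply, Fintype.sum_prod_type, Fin.sum_univ_two,
      Matrix.one_apply, Prod.ext_iff] <;> ring_nf <;>
    simp [pow_succ, Complex.I_mul_I] <;> ring_nf

set_option maxHeartbeats 1000000 in
lemma hdiag (c2 : ℝ) :
    (Complex.I / 2) • Hmat (Real.pi / 2) c2 0 = Smat * Matrix.diagonal (dvec c2) * Sinv := by
  ext p q
  fin_cases p <;> fin_cases q
  all_goals
    simp [Smat, Sinv, dvec, Hmat, σx, σy, σz, Matrix.mul_apply, Fintype.sum_prod_type,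
      Fin.sum_univ_two, Matrix.diagonal, Matrix.kroneckerMap_apply, Complex.ofReal_div]
  all_goals ring_nf
  all_goals simp only [show (Complex.I:ℂ)^3 = -Complex.I by
    rw [pow_succ, Complex.I_sq]; ring]
  all_goals ring_nf

lemma Udval (c2 : ℝ) :
    Ud (Real.pi / 2) c2 0
      = Smat * Matrix.diagonal (fun p => Complex.exp (dvec c2 p)) * Sinv := by
  have hU : IsUnit Smat := ⟨⟨Smat, Sinv, hS1, hS2⟩, rfl⟩
  rw [Ud, hdiag]
  have hinv : Smat⁻¹ = Sinv := Matrix.inv_eq_right_inv hS1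
  rw [← hinv, Matrix.exp_conj Smat _ hU, Matrix.exp_diagonal, hinv]
  congr 1
  congr 1
  funext p
  rw [Pi.exp_def]
  rw [← Complex.exp_eq_exp_ℂ]
def Evec (c2 : ℝ) : Fin 2 × Fin 2 → ℂ := fun p => Complex.exp (dvec c2 p)

def wvec (c2 : ℝ) : Fin 4 → (Fin 2 × Fin 2 → ℂ) :=
  ![fun p => (1/2) * ![![Evec c2 (0,0), Complex.I * Evec c2 (1,0)],
                       ![-(Complex.I * Evec c2 (1,0)), Evec c2 (0,0)]] p.1 p.2,
    fun p => (1/2) * ![![Evec c2 (0,0), -(Complex.I * Evec c2 (1,0))],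
                       ![Complex.I * Evec c2 (1,0), Evec c2 (0,0)]] p.1 p.2,
    fun p => (1/2) * ![![-Evec c2 (1,1), Complex.I * Evec c2 (0,1)],
                       ![Complex.I * Evec c2 (0,1), Evec c2 (1,1)]] p.1 p.2,
    fun p => (1/2) * ![![Evec c2 (1,1), Complex.I * Evec c2 (0,1)],
                       ![Complex.I * Evec c2 (0,1), -Evec c2 (1,1)]] p.1 p.2]

lemma sqrt2_sq : ((Real.sqrt 2 : ℝ) : ℂ) * ((Real.sqrt 2 : ℝ) : ℂ) = 2 := by
  rw [← Complex.ofReal_mul, Real.mul_self_sqrt (by norm_num : (0:ℝ) ≤ 2)]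
  norm_num

set_option maxHeartbeats 2000000 in
lemma himg (c2 : ℝ) (i : Fin 4) :
    (Ud (Real.pi / 2) c2 0).mulVec (speBasis i) = wvec c2 i := by
  have hsq : (((Real.sqrt 2 : ℝ) : ℂ))⁻¹ ^ 2 = 1/2 := by
    rw [sq, ← mul_inv, sqrt2_sq]; norm_num
  rw [Udval]
  funext p
  have hI3 : (Complex.I:ℂ)^3 = -Complex.I := by rw [pow_succ, Complex.I_sq]; ring
  fin_cases i <;> fin_cases p
  all_goals simp [Matrix.mulVec, dotProduct, Fintype.sum_prod_type, Fin.sum_univ_two,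
      speBasis, Psi, ket, Smat, Sinv, Evec, wvec, Matrix.mul_apply, Matrix.diagonal,
      Matrix.vecHead, Matrix.vecTail,
      Pi.add_apply, Pi.sub_apply, Pi.smul_apply, smul_eq_mul]
  all_goals try ring_nf
  all_goals try simp [hsq, hI3]
  all_goals try ring_nf

set_option maxHeartbeats 2000000 in
lemma part1 : ∀ i j, ip (speBasis i) (speBasis j) = if i = j then 1 else 0 := by
  have hsq : (((Real.sqrt 2 : ℝ) : ℂ))⁻¹ ^ 2 = 1/2 := by
    rw [sq, ← mul_inv, sqrt2_sq]; norm_num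
  have hI3 : (Complex.I:ℂ)^3 = -Complex.I := by rw [pow_succ, Complex.I_sq]; ring
  have hI4 : (Complex.I:ℂ)^4 = 1 := by rw [pow_succ, hI3]; simp [Complex.I_mul_I]
  intro i j
  fin_cases i <;> fin_cases j
  all_goals simp [ip, speBasis, Psi, ket, Fintype.sum_prod_type, Fin.sum_univ_two,
    _root_.map_mul, map_inv₀, Complex.conj_I, Complex.conj_ofReal,
    Matrix.vecHead, Matrix.vecTail, Prod.mk.injEq,
    Pi.add_apply, Pi.sub_apply, Pi.smul_apply, smul_eq_mul]
  all_goals try ring_nf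
  all_goals try simp +decide [hsq, show (((Real.sqrt 2 : ℝ) : ℂ))⁻¹ ^ 4 = 1/4 by rw [show 4 = 2*2 from rfl, pow_mul, hsq]; norm_num, Complex.I_sq, hI3, hI4]
  all_goals try ring_nf

set_option maxHeartbeats 2000000 in
lemma part2 : ∀ i, conc (speBasis i) = 0 := by
  have hsq : (((Real.sqrt 2 : ℝ) : ℂ))⁻¹ ^ 2 = 1/2 := by
    rw [sq, ← mul_inv, sqrt2_sq]; norm_num
  have hI3 : (Complex.I:ℂ)^3 = -Complex.I := by rw [pow_succ, Complex.I_sq]; ring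
  have hI4 : (Complex.I:ℂ)^4 = 1 := by rw [pow_succ, hI3]; simp [Complex.I_mul_I]
  intro i
  fin_cases i
  all_goals simp [conc, speBasis, Psi, ket, Matrix.vecHead, Matrix.vecTail, Prod.mk.injEq,
    Pi.add_apply, Pi.sub_apply, Pi.smul_apply, smul_eq_mul]
  all_goals try ring_nf
  all_goals try simp +decide [hsq, show (((Real.sqrt 2 : ℝ) : ℂ))⁻¹ ^ 4 = 1/4 by rw [show 4 = 2*2 from rfl, pow_mul, hsq]; norm_num, Complex.I_sq, hI3, hI4]
  all_goals try ring_nf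

lemma conj_dvec (c2 : ℝ) (p : Fin 2 × Fin 2) :
    (starRingEnd ℂ) (dvec c2 p) = -(dvec c2 p) := by
  fin_cases p <;>
    simp [dvec, _root_.map_mul, map_div₀, map_sub, map_add, Complex.conj_I, map_ofNat,
      Complex.conj_ofReal, Matrix.vecHead, Matrix.vecTail] <;> ring

lemma conj_exp_dvec (c2 : ℝ) (p : Fin 2 × Fin 2) :
    (starRingEnd ℂ) (Complex.exp (dvec c2 p)) = Complex.exp (-(dvec c2 p)) := by
  rw [← Complex.exp_conj, conj_dvec]

set_option maxHeartbeats 2000000 in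
lemma part3 (c2 : ℝ) : ∀ i j, ip (wvec c2 i) (wvec c2 j) = if i = j then 1 else 0 := by
  intro i j
  fin_cases i <;> fin_cases j
  all_goals simp [ip, wvec, Evec, Fintype.sum_prod_type, Fin.sum_univ_two,
    _root_.map_mul, map_neg, Complex.conj_I, conj_exp_dvec,
    Matrix.vecHead, Matrix.vecTail, ← Complex.exp_add]
  all_goals try ring_nf
  all_goals try simp +decide [Complex.I_sq]
  all_goals try ring_nf
  all_goals try simp [Complex.exp_neg, map_ofNat]
  all_goals try field_simp
  all_goals norm_num

set_option maxHeartbeats 2000000 in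
lemma part4 (c2 : ℝ) : ∀ i, conc (wvec c2 i) = 1 := by
  have hpi : Complex.exp ((Real.pi/2 : ℝ) * Complex.I) = Complex.I := by
    rw [Complex.exp_mul_I, ← Complex.ofReal_cos, ← Complex.ofReal_sin,
      Real.cos_pi_div_two, Real.sin_pi_div_two]
    simp
  have hpi' : Complex.exp (-((Real.pi/2 : ℝ) * Complex.I)) = -Complex.I := by
    rw [Complex.exp_neg, hpi, Complex.inv_I]
  have h1 : Complex.exp (dvec c2 0) ^ 2
      = Complex.I * Complex.exp (-(Complex.I * c2)) := by
    rw [sq, ← Complex.exp_add]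
    rw [show dvec c2 0 + dvec c2 0
        = ((Real.pi/2 : ℝ) * Complex.I) + -(Complex.I * c2) by
      simp [dvec]; push_cast; ring]
    rw [Complex.exp_add, hpi]
  have h2 : Complex.exp (dvec c2 ((1 : Fin 2),(0 : Fin 2))) ^ 2
      = -Complex.I * Complex.exp (-(Complex.I * c2)) := by
    rw [sq, ← Complex.exp_add]
    rw [show dvec c2 ((1 : Fin 2),(0 : Fin 2)) + dvec c2 ((1 : Fin 2),(0 : Fin 2))
        = -((Real.pi/2 : ℝ) * Complex.I) + -(Complex.I * c2) by
      simp [dvec, Matrix.vecHead, Matrix.vecTail]; push_cast; ring]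
    rw [Complex.exp_add, hpi']
  have h3 : Complex.exp (dvec c2 ((0 : Fin 2),(1 : Fin 2))) ^ 2
      = Complex.I * Complex.exp (Complex.I * c2) := by
    rw [sq, ← Complex.exp_add]
    rw [show dvec c2 ((0 : Fin 2),(1 : Fin 2)) + dvec c2 ((0 : Fin 2),(1 : Fin 2))
        = ((Real.pi/2 : ℝ) * Complex.I) + (Complex.I * c2) by
      simp [dvec, Matrix.vecHead, Matrix.vecTail]; push_cast; ring]
    rw [Complex.exp_add, hpi]
  have h4 : Complex.exp (dvec c2 1) ^ 2
      = -Complex.I * Complex.exp (Complex.I * c2) := by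
    rw [sq, ← Complex.exp_add]
    rw [show dvec c2 1 + dvec c2 1
        = -((Real.pi/2 : ℝ) * Complex.I) + (Complex.I * c2) by
      simp [dvec, Matrix.vecHead, Matrix.vecTail]; push_cast; ring]
    rw [Complex.exp_add, hpi']
  have habs : ∀ (r : ℝ), ‖Complex.exp (Complex.I * (r:ℂ))‖ = 1 := by
    intro r; rw [Complex.norm_exp]; simp
  have habs' : ∀ (r : ℝ), ‖Complex.exp (-(Complex.I * (r:ℂ)))‖ = 1 := by
    intro r; rw [Complex.norm_exp]; simp
  intro i
  fin_cases i
  all_goals simp [conc, wvec, Evec, Matrix.vecHead, Matrix.vecTail]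
  all_goals ring_nf
  all_goals simp only [Complex.I_sq, Prod.mk_zero_zero, Prod.mk_one_one, h1, h2, h3, h4]
  all_goals ring_nf
  all_goals simp [_root_.map_mul, Complex.norm_I, habs, habs', map_div₀]
  all_goals norm_num

/-- Every special perfect entangler U_d(π/2, c₂, 0) maps the orthonormal product basis
{(Ψ₁ ± iΨ₃)/√2, (Ψ₂ ± iΨ₄)/√2} to an orthonormal maximally entangled basis. -/
theorem stmt17 (c2 : ℝ) :
    (∀ i j, ip (speBasis i) (speBasis j) = if i = j then 1 else 0) ∧
    (∀ i, conc (speBasis i) = 0) ∧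
    (∀ i j, ip ((Ud (Real.pi / 2) c2 0).mulVec (speBasis i))
        ((Ud (Real.pi / 2) c2 0).mulVec (speBasis j)) = if i = j then 1 else 0) ∧
    (∀ i, conc ((Ud (Real.pi / 2) c2 0).mulVec (speBasis i)) = 1) := by
  refine ⟨part1, part2, ?_, ?_⟩
  · intro i j
    rw [himg c2 i, himg c2 j]
    exact part3 c2 i j
  · intro i
    rw [himg c2 i]
    exact part4 c2 i
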